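/- Let p : ℕ → ℝ with 0 < p(n) < 1 for all n and n·p(n) → ∞ as n → ∞. Then for every α > 0, the probability that the binomial random graph G(n, p(n)) has the property that every red-blue colouring of its edges contains a monochromatic path of length at least (1/2 − α)n tends to 1 as n → ∞. -/

import Mathlib

open MeasureTheory Filter Finset
open scoped ENNReal

set_option linter.unusedSectionVars false
set_option linter.unnecessarySimpa false
set_option linter.unusedTactic false
set_option maxHeartbeats 1000000

/-- The simple graph on `Fin n` determined by an indicator function on the
unordered pairs of distinct vertices. -/
def graphOfIndicator (n : ℕ) (ω : {e : Sym2 (Fin n) // ¬ e.IsDiag} → Bool) :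
    SimpleGraph (Fin n) where
  Adj v w := ∃ h : v ≠ w, ω ⟨s(v, w), by simp [Sym2.mk_isDiag_iff, h]⟩ = true
  symm := by
    constructor
    rintro v w ⟨h, hvw⟩
    refine ⟨h.symm, ?_⟩
    have he : (⟨s(w, v), by simp [Sym2.mk_isDiag_iff, h.symm]⟩ :
        {e : Sym2 (Fin n) // ¬ e.IsDiag}) =
        ⟨s(v, w), by simp [Sym2.mk_isDiag_iff, h]⟩ := Subtype.ext (Sym2.eq_swap)
    rw [he]
    exact hvw
  loopless := by
    constructor
    rintro v ⟨h, -⟩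
    exact h rfl

/-- The distribution of the binomial random graph `G(n,p)`: the product, over all
unordered pairs of distinct vertices of `Fin n`, of Bernoulli(p) measures. -/
noncomputable def gnpMeasure (n : ℕ) (p : ℝ) (hp : p ≤ 1) :
    Measure ({e : Sym2 (Fin n) // ¬ e.IsDiag} → Bool) :=
  Measure.pi fun _ =>
    (PMF.bernoulli (Real.toNNReal p) (Real.toNNReal_le_one.2 hp)).toMeasure


open Finset

section DFS

variable {V : Type*} [Fintype V] [DecidableEq V]

/-- Build a walk from a chain of adjacent vertices. -/
lemma exists_walk_of_chain (G : SimpleGraph V) :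
    ∀ (l : List V) (u : V), List.Chain G.Adj u l →
      ∃ (v : V) (w : G.Walk u v), w.support = u :: l
  | [], u, _ => ⟨u, SimpleGraph.Walk.nil, rfl⟩
  | x :: t, u, h => by
      rcases List.chain_cons.mp h with ⟨hadj, hch⟩
      obtain ⟨v, w, hw⟩ := exists_walk_of_chain G t x hch
      exact ⟨v, SimpleGraph.Walk.cons hadj w, by simp [hw]⟩

/-- In a list forming a chain for a relation that never relates two elements
of `S`, at most half (rounded up) of the entries satisfy the predicate. -/
lemma countP_le_half_of_chain' {R : V → V → Prop} {p : V → Bool}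
    (hR : ∀ x y, R x y → p x = true → p y = true → False) :
    ∀ l : List V, l.Chain' R → l.countP p ≤ (l.length + 1) / 2
  | [], _ => by simp
  | [x], _ => by
      by_cases h : p x <;> simp [List.countP, List.countP.go, h]
  | x :: y :: t, h => by
      have h1 : R x y := (List.isChain_cons_cons.mp h).1
      have h2 : List.Chain' R (y :: t) := (List.isChain_cons_cons.mp h).2
      have h3 : List.Chain' R t := h2.tail
      have IH := countP_le_half_of_chain' hR t h3
      have hxy : ¬(p x = true ∧ p y = true) := fun ⟨a, b⟩ => hR x y h1 a b
      rw [List.countP_cons, List.countP_cons]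
      by_cases hx : p x = true <;> by_cases hy : p y = true <;>
        simp [hx, hy] at hxy ⊢ <;> omega

lemma card_inter_toFinset_le_half_of_chain' {R : V → V → Prop} {S : Finset V}
    (hR : ∀ x y, R x y → x ∈ S → y ∈ S → False)
    (l : List V) (hl : l.Chain' R) :
    (S ∩ l.toFinset).card ≤ (l.length + 1) / 2 := by
  have h1 : S ∩ l.toFinset = (l.filter (fun x => x ∈ S)).toFinset := by
    ext a; simp [and_comm]
  rw [h1]
  calc (l.filter (fun x => x ∈ S)).toFinset.card
      ≤ (l.filter (fun x => x ∈ S)).length := (l.filter (fun x => x ∈ S)).toFinset_card_le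
    _ = l.countP (fun x => x ∈ S) := List.countP_eq_length_filter.symm
    _ ≤ (l.length + 1) / 2 :=
        countP_le_half_of_chain' (p := fun x => x ∈ S)
          (fun x y h hx hy => hR x y h (by simpa using hx) (by simpa using hy)) l hl

/-- Output of the DFS process: either a long path, or a balanced separation. -/
def DfsOut (G : SimpleGraph V) (L : ℕ) : Prop :=
  (∃ (u v : V) (w : G.Walk u v), w.IsPath ∧ L ≤ w.length) ∨
  ∃ (D Nw : Finset V) (l : List V),
    Disjoint D Nw ∧ D.card = Nw.card ∧ l.Chain' G.Adj ∧ l.Nodup ∧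
    (∀ x ∈ l, x ∉ D) ∧ (∀ x ∈ l, x ∉ Nw) ∧
    (∀ x : V, x ∈ D ∨ x ∈ l ∨ x ∈ Nw) ∧
    l.length ≤ L ∧
    (∀ x ∈ D, ∀ y ∈ Nw, ¬ G.Adj x y)

lemma dfs_aux (G : SimpleGraph V) (L : ℕ) :
    ∀ (m : ℕ) (D Nw : Finset V) (l : List V),
      2 * Nw.card + l.length ≤ m →
      Disjoint D Nw → l.Chain' G.Adj → l.Nodup →
      (∀ x ∈ l, x ∉ D) → (∀ x ∈ l, x ∉ Nw) →
      (∀ x : V, x ∈ D ∨ x ∈ l ∨ x ∈ Nw) →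
      (∀ x ∈ D, ∀ y ∈ Nw, ¬ G.Adj x y) →
      D.card ≤ Nw.card →
      DfsOut G L := by
  intro m
  induction m with
  | zero =>
    intro D Nw l hm hDN hch hnd hlD hlN hcov hedge hle
    have h1 : Nw.card = 0 := by omega
    have h2 : l = [] := List.length_eq_zero_iff.mp (by omega)
    subst h2
    exact Or.inr ⟨D, Nw, [], hDN, by omega, hch, hnd, hlD, hlN, hcov, by simp, hedge⟩
  | succ m IH =>
    intro D Nw l hm hDN hch hnd hlD hlN hcov hedge hle
    by_cases hcross : D.card = Nw.card
    · by_cases hlen : l.length ≤ L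
      · exact Or.inr ⟨D, Nw, l, hDN, hcross, hch, hnd, hlD, hlN, hcov, hlen, hedge⟩
      · left
        match l, hch, hnd, hlen with
        | [], _, _, hlen => exact absurd (Nat.zero_le L) (by simpa using hlen)
        | u :: t, hch, hnd, hlen =>
          have hch' : List.Chain G.Adj u t := hch
          obtain ⟨v, w, hw⟩ := exists_walk_of_chain G t u hch'
          refine ⟨u, v, w, ?_, ?_⟩
          · rw [SimpleGraph.Walk.isPath_def, hw]; exact hnd
          · have := w.length_support
            rw [hw] at this
            simp only [List.length_cons] at this hlen
            omega
    · have hlt : D.card < Nw.card := lt_of_le_of_ne hle hcross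
      match l, hch, hnd, hlD, hlN, hcov, hm with
      | [], hch, hnd, hlD, hlN, hcov, hm =>
        have hne : Nw.Nonempty := card_pos.mp (by omega)
        obtain ⟨u, hu⟩ := hne
        refine IH D (Nw.erase u) [u] ?_ ?_ ?_ ?_ ?_ ?_ ?_ ?_ ?_
        · have := card_erase_of_mem hu
          simp only [List.length_cons, List.length_nil] at hm ⊢
          omega
        · exact disjoint_of_subset_right (erase_subset u Nw) hDN
        · exact List.isChain_singleton _
        · simp
        · intro x hx
          simp only [List.mem_singleton] at hx
          subst hx
          exact fun hxD => (disjoint_left.mp hDN hxD) hu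
        · intro x hx
          simp only [List.mem_singleton] at hx
          subst hx
          exact notMem_erase _ _
        · intro x
          rcases hcov x with h | h | h
          · exact Or.inl h
          · simp at h
          · rcases eq_or_ne x u with rfl | hne'
            · exact Or.inr (Or.inl (by simp))
            · exact Or.inr (Or.inr (mem_erase.mpr ⟨hne', h⟩))
        · exact fun x hx y hy => hedge x hx y (mem_of_mem_erase hy)
        · have := card_erase_of_mem hu
          omega
      | u :: t, hch, hnd, hlD, hlN, hcov, hm =>
        by_cases hnb : ∃ x ∈ Nw, G.Adj u x
        · obtain ⟨x, hxNw, hadj⟩ := hnb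
          refine IH D (Nw.erase x) (x :: u :: t) ?_ ?_ ?_ ?_ ?_ ?_ ?_ ?_ ?_
          · have := card_erase_of_mem hxNw
            simp only [List.length_cons] at hm ⊢
            omega
          · exact disjoint_of_subset_right (erase_subset x Nw) hDN
          · exact List.isChain_cons_cons.mpr ⟨hadj.symm, hch⟩
          · refine List.nodup_cons.mpr ⟨?_, hnd⟩
            exact fun hx => hlN x hx hxNw
          · intro y hy
            rcases List.mem_cons.mp hy with rfl | hy'
            · exact fun hyD => (disjoint_left.mp hDN hyD) hxNw
            · exact hlD y hy'
          · intro y hy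
            rcases List.mem_cons.mp hy with rfl | hy'
            · exact notMem_erase _ _
            · exact fun hmem => hlN y hy' (mem_of_mem_erase hmem)
          · intro y
            rcases hcov y with h | h | h
            · exact Or.inl h
            · exact Or.inr (Or.inl (List.mem_cons_of_mem x h))
            · rcases eq_or_ne y x with rfl | hne'
              · exact Or.inr (Or.inl (List.mem_cons_self))
              · exact Or.inr (Or.inr (mem_erase.mpr ⟨hne', h⟩))
          · exact fun a ha b hb => hedge a ha b (mem_of_mem_erase hb)
          · have := card_erase_of_mem hxNw
            omega
        · push_neg at hnb
          refine IH (insert u D) Nw t ?_ ?_ ?_ ?_ ?_ ?_ ?_ ?_ ?_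
          · simp only [List.length_cons] at hm; omega
          · refine disjoint_left.mpr ?_
            intro a ha
            rcases mem_insert.mp ha with rfl | haD
            · exact hlN a (List.mem_cons_self)
            · exact disjoint_left.mp hDN haD
          · exact hch.tail
          · exact hnd.of_cons
          · intro y hy hyins
            rcases mem_insert.mp hyins with rfl | hyD
            · exact (List.nodup_cons.mp hnd).1 hy
            · exact hlD y (List.mem_cons_of_mem u hy) hyD
          · exact fun y hy => hlN y (List.mem_cons_of_mem u hy)
          · intro y
            rcases hcov y with h | h | h
            · exact Or.inl (mem_insert_of_mem h)
            · rcases List.mem_cons.mp h with rfl | h'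
              · exact Or.inl (mem_insert_self _ _)
              · exact Or.inr (Or.inl h')
            · exact Or.inr (Or.inr h)
          · intro a ha b hb
            rcases mem_insert.mp ha with rfl | haD
            · exact hnb b hb
            · exact hedge a haD b hb
          · calc (insert u D).card ≤ D.card + 1 := card_insert_le _ _
              _ ≤ Nw.card := hlt

lemma dfs_main (G : SimpleGraph V) (L : ℕ) : DfsOut G L := by
  refine dfs_aux G L (2 * Fintype.card V) ∅ univ [] ?_ ?_ ?_ ?_ ?_ ?_ ?_ ?_ ?_
  · simp [Finset.card_univ]
  · exact disjoint_empty_left _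
  · exact List.isChain_nil
  · simp
  · simp
  · simp
  · intro x; exact Or.inr (Or.inr (mem_univ x))
  · simp
  · simp

end DFS

section Combo

variable {V : Type*} [Fintype V] [DecidableEq V]

lemma dfs_card_eq {D Nw : Finset V} {l : List V} (hDN : Disjoint D Nw)
    (hnd : l.Nodup) (hlD : ∀ x ∈ l, x ∉ D) (hlN : ∀ x ∈ l, x ∉ Nw)
    (hcov : ∀ x : V, x ∈ D ∨ x ∈ l ∨ x ∈ Nw) :
    D.card + Nw.card + l.length = Fintype.card V := by
  have hDl : Disjoint D l.toFinset := by
    rw [Finset.disjoint_right]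
    intro x hx
    exact hlD x (List.mem_toFinset.mp hx)
  have hNl : Disjoint Nw l.toFinset := by
    rw [Finset.disjoint_right]
    intro x hx
    exact hlN x (List.mem_toFinset.mp hx)
  have huniv : (univ : Finset V) = D ∪ Nw ∪ l.toFinset := by
    ext x
    simp only [mem_univ, true_iff, mem_union, List.mem_toFinset]
    rcases hcov x with h | h | h <;> tauto
  have h1 : (D ∪ Nw ∪ l.toFinset).card = D.card + Nw.card + l.length := by
    rw [card_union_of_disjoint (by rw [disjoint_union_left]; exact ⟨hDl, hNl⟩),
      card_union_of_disjoint hDN, List.card_toFinset, hnd.dedup]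
  rw [← Finset.card_univ, huniv, h1]

/-- The key combinatorial lemma: a graph in which every two disjoint `k`-sets
span an edge has, for every red-blue colouring, a monochromatic path of length
at least `L`, provided `2L + 4k + 1 ≤ n`. -/
theorem mono_path_of_expander {n k L : ℕ} (G : SimpleGraph (Fin n))
    (c : Sym2 (Fin n) → Bool)
    (hexp : ∀ A B : Finset (Fin n), Disjoint A B → k ≤ A.card → k ≤ B.card →
      ∃ a ∈ A, ∃ b ∈ B, G.Adj a b)
    (hn : 2 * L + 4 * k + 1 ≤ n) :
    ∃ (u v : Fin n) (w : G.Walk u v) (b : Bool),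
      w.IsPath ∧ (∀ e ∈ w.edges, c e = b) ∧ L ≤ w.length := by
  classical
  -- the red graph
  set Gr : SimpleGraph (Fin n) :=
    { Adj := fun x y => G.Adj x y ∧ c s(x, y) = true
      symm := by
        constructor
        rintro x y ⟨h, hc⟩
        exact ⟨h.symm, by rwa [Sym2.eq_swap]⟩
      loopless := ⟨fun x h => G.loopless.irrefl x h.1⟩ } with hGr
  rcases dfs_main Gr L with ⟨u, v, w, hw, hwl⟩ | ⟨S, U, lr, hSU, hSUcard, _, hrnd, hrlD, hrlN, hrcov, hrlen, hred⟩
  · -- long red path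
    have hle : Gr ≤ G := fun _ _ h => h.1
    refine ⟨u, v, w.map (SimpleGraph.Hom.ofLE hle), true, ?_, ?_, ?_⟩
    · exact SimpleGraph.Walk.map_isPath_of_injective (by simp [Function.injective_id]) hw
    · intro e he
      rw [SimpleGraph.Walk.edges_map] at he
      obtain ⟨e', he', rfl⟩ := List.mem_map.mp he
      have heG : e' ∈ Gr.edgeSet := w.edges_subset_edgeSet he'
      rw [SimpleGraph.Hom.coe_ofLE, Sym2.map_id, id_eq]
      induction e' with
      | _ x y => exact ((SimpleGraph.mem_edgeSet _).mp heG).2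
    · rwa [SimpleGraph.Walk.length_map]
  · -- balanced separation for red; all `G`-edges between `S` and `U` are blue
    have hblue : ∀ a ∈ S, ∀ b ∈ U, G.Adj a b → c s(a, b) = false := by
      intro a ha b hb hadj
      have := hred a ha b hb
      rcases Bool.eq_false_or_eq_true (c s(a, b)) with h | h
      · exact absurd ⟨hadj, h⟩ this
      · exact h
    have hStotal : S.card + U.card + lr.length = n := by
      have := dfs_card_eq hSU hrnd hrlD hrlN hrcov
      rwa [Fintype.card_fin] at this
    set W : Finset (Fin n) := S ∪ U with hW
    -- the blue bipartite-type graph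
    set H : SimpleGraph {x // x ∈ W} :=
      { Adj := fun a b => G.Adj a.1 b.1 ∧ c s(a.1, b.1) = false ∧
          ((a.1 ∈ S ∧ b.1 ∈ U) ∨ (a.1 ∈ U ∧ b.1 ∈ S))
        symm := by
          constructor
          rintro a b ⟨h1, h2, h3⟩
          refine ⟨h1.symm, by rwa [Sym2.eq_swap], ?_⟩
          rcases h3 with ⟨h4, h5⟩ | ⟨h4, h5⟩
          · exact Or.inr ⟨h5, h4⟩
          · exact Or.inl ⟨h5, h4⟩
        loopless := ⟨fun a h => G.loopless.irrefl a.1 h.1⟩ } with hH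
    rcases dfs_main H L with ⟨u, v, w, hw, hwl⟩ | ⟨D', N', l', hDN', hDNcard', hch', hnd', hlD', hlN', hcov', hlen', hnoH⟩
    · -- long blue path
      refine ⟨_, _, w.map (⟨Subtype.val, fun h => h.1⟩ : H →g G), false, ?_, ?_, ?_⟩
      · exact SimpleGraph.Walk.map_isPath_of_injective Subtype.val_injective hw
      · intro e he
        rw [SimpleGraph.Walk.edges_map] at he
        obtain ⟨e', he', rfl⟩ := List.mem_map.mp he
        have heG : e' ∈ H.edgeSet := w.edges_subset_edgeSet he'
        induction e' with
        | _ x y =>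
          rw [Sym2.map_pair_eq]
          exact ((SimpleGraph.mem_edgeSet _).mp heG).2.1
      · rwa [SimpleGraph.Walk.length_map]
    · -- second separation: contradiction with expansion
      exfalso
      set D0 : Finset (Fin n) := D'.image Subtype.val with hD0
      set N0 : Finset (Fin n) := N'.image Subtype.val with hN0
      set l0 : List (Fin n) := l'.map Subtype.val with hl0
      have hD0card : D0.card = D'.card := card_image_of_injective _ Subtype.val_injective
      have hN0card : N0.card = N'.card := card_image_of_injective _ Subtype.val_injective
      have hD0N0 : Disjoint D0 N0 := (disjoint_image Subtype.val_injective).mpr hDN'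
      have hD0W : D0 ⊆ W := by
        intro x hx; obtain ⟨a, _, rfl⟩ := mem_image.mp hx; exact a.2
      have hN0W : N0 ⊆ W := by
        intro x hx; obtain ⟨a, _, rfl⟩ := mem_image.mp hx; exact a.2
      have hcov0 : ∀ x ∈ W, x ∈ D0 ∨ x ∈ l0 ∨ x ∈ N0 := by
        intro x hx
        rcases hcov' ⟨x, hx⟩ with h | h | h
        · exact Or.inl (mem_image.mpr ⟨_, h, rfl⟩)
        · exact Or.inr (Or.inl (List.mem_map.mpr ⟨_, h, rfl⟩))
        · exact Or.inr (Or.inr (mem_image.mpr ⟨_, h, rfl⟩))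
      have hSU' : Disjoint S U := hSU
      have hWcard : W.card = S.card + U.card := card_union_of_disjoint hSU'
      have hsum' : D'.card + N'.card + l'.length = S.card + U.card := by
        have := dfs_card_eq hDN' hnd' hlD' hlN' hcov'
        rwa [Fintype.card_coe, hWcard] at this
      have hl0len : l0.length = l'.length := List.length_map _
      have hScard : S.card = U.card := hSUcard
      -- expansion contradictions
      have hkey1 : (D0 ∩ S).card < k ∨ (N0 ∩ U).card < k := by
        by_contra hcon
        push_neg at hcon
        obtain ⟨hk1, hk2⟩ := hcon
        have hdisj : Disjoint (D0 ∩ S) (N0 ∩ U) :=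
          hD0N0.mono (inter_subset_left) (inter_subset_left)
        obtain ⟨a, ha, b, hb, hadj⟩ := hexp _ _ hdisj hk1 hk2
        obtain ⟨haD, haS⟩ := mem_inter.mp ha
        obtain ⟨hbN, hbU⟩ := mem_inter.mp hb
        obtain ⟨a', ha', rfl⟩ := mem_image.mp haD
        obtain ⟨b', hb', rfl⟩ := mem_image.mp hbN
        exact hnoH a' ha' b' hb' ⟨hadj, hblue _ haS _ hbU hadj, Or.inl ⟨haS, hbU⟩⟩
      have hkey2 : (D0 ∩ U).card < k ∨ (N0 ∩ S).card < k := by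
        by_contra hcon
        push_neg at hcon
        obtain ⟨hk1, hk2⟩ := hcon
        have hdisj : Disjoint (D0 ∩ U) (N0 ∩ S) :=
          hD0N0.mono (inter_subset_left) (inter_subset_left)
        obtain ⟨a, ha, b, hb, hadj⟩ := hexp _ _ hdisj hk1 hk2
        obtain ⟨haD, haU⟩ := mem_inter.mp ha
        obtain ⟨hbN, hbS⟩ := mem_inter.mp hb
        obtain ⟨a', ha', rfl⟩ := mem_image.mp haD
        obtain ⟨b', hb', rfl⟩ := mem_image.mp hbN
        have hcol : c s(a'.1, b'.1) = false := by
          have := hblue _ hbS _ haU hadj.symm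
          rwa [Sym2.eq_swap] at this
        exact hnoH a' ha' b' hb' ⟨hadj, hcol, Or.inr ⟨haU, hbS⟩⟩
      -- decomposition of D0 and N0 over S and U
      have hD0split : D0.card ≤ (D0 ∩ S).card + (D0 ∩ U).card := by
        have : D0 = (D0 ∩ S) ∪ (D0 ∩ U) := by
          rw [← inter_union_distrib_left]
          exact (inter_eq_left.mpr hD0W).symm
        calc D0.card = ((D0 ∩ S) ∪ (D0 ∩ U)).card := by rw [← this]
          _ ≤ _ := card_union_le _ _
      have hN0split : N0.card ≤ (N0 ∩ S).card + (N0 ∩ U).card := by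
        have : N0 = (N0 ∩ S) ∪ (N0 ∩ U) := by
          rw [← inter_union_distrib_left]
          exact (inter_eq_left.mpr hN0W).symm
        calc N0.card = ((N0 ∩ S) ∪ (N0 ∩ U)).card := by rw [← this]
          _ ≤ _ := card_union_le _ _
      -- alternation along the blue stack
      have hcross : ∀ (x y : Fin n),
          ((∃ hx : x ∈ W, ∃ hy : y ∈ W, H.Adj ⟨x, hx⟩ ⟨y, hy⟩)) →
            ¬(x ∈ S ∧ y ∈ S) ∧ ¬(x ∈ U ∧ y ∈ U) := by
        rintro x y ⟨hx, hy, _, _, hc⟩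
        constructor
        · rintro ⟨hxS, hyS⟩
          rcases hc with ⟨_, h⟩ | ⟨h, _⟩
          · exact (Finset.disjoint_left.mp hSU' hyS) h
          · exact (Finset.disjoint_left.mp hSU' hxS) h
        · rintro ⟨hxU, hyU⟩
          rcases hc with ⟨h, _⟩ | ⟨_, h⟩
          · exact (Finset.disjoint_left.mp hSU' h) hxU
          · exact (Finset.disjoint_left.mp hSU' h) hyU
      have hch0 : l0.Chain' (fun x y =>
          ∃ hx : x ∈ W, ∃ hy : y ∈ W, H.Adj ⟨x, hx⟩ ⟨y, hy⟩) := by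
        rw [hl0]; show List.IsChain _ _; rw [List.isChain_map]
        exact List.IsChain.imp (fun a b hab => ⟨a.2, b.2, hab⟩) hch'
      have haltS : (S ∩ l0.toFinset).card ≤ (l0.length + 1) / 2 :=
        card_inter_toFinset_le_half_of_chain'
          (fun x y h hx hy => (hcross x y h).1 ⟨hx, hy⟩) l0 hch0
      have haltU : (U ∩ l0.toFinset).card ≤ (l0.length + 1) / 2 :=
        card_inter_toFinset_le_half_of_chain'
          (fun x y h hx hy => (hcross x y h).2 ⟨hx, hy⟩) l0 hch0
      -- covering S and U
      have hSsplit : S.card ≤ (D0 ∩ S).card + (N0 ∩ S).card + (S ∩ l0.toFinset).card := by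
        have hsub : S ⊆ (D0 ∩ S) ∪ (N0 ∩ S) ∪ (S ∩ l0.toFinset) := by
          intro x hx
          have hxW : x ∈ W := mem_union_left _ hx
          rcases hcov0 x hxW with h | h | h
          · exact mem_union_left _ (mem_union_left _ (mem_inter.mpr ⟨h, hx⟩))
          · exact mem_union_right _ (mem_inter.mpr ⟨hx, List.mem_toFinset.mpr h⟩)
          · exact mem_union_left _ (mem_union_right _ (mem_inter.mpr ⟨h, hx⟩))
        calc S.card ≤ ((D0 ∩ S) ∪ (N0 ∩ S) ∪ (S ∩ l0.toFinset)).card := card_le_card hsub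
          _ ≤ ((D0 ∩ S) ∪ (N0 ∩ S)).card + (S ∩ l0.toFinset).card := card_union_le _ _
          _ ≤ (D0 ∩ S).card + (N0 ∩ S).card + (S ∩ l0.toFinset).card := by
              have := card_union_le (D0 ∩ S) (N0 ∩ S); omega
      have hUsplit : U.card ≤ (D0 ∩ U).card + (N0 ∩ U).card + (U ∩ l0.toFinset).card := by
        have hsub : U ⊆ (D0 ∩ U) ∪ (N0 ∩ U) ∪ (U ∩ l0.toFinset) := by
          intro x hx
          have hxW : x ∈ W := mem_union_right _ hx
          rcases hcov0 x hxW with h | h | h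
          · exact mem_union_left _ (mem_union_left _ (mem_inter.mpr ⟨h, hx⟩))
          · exact mem_union_right _ (mem_inter.mpr ⟨hx, List.mem_toFinset.mpr h⟩)
          · exact mem_union_left _ (mem_union_right _ (mem_inter.mpr ⟨h, hx⟩))
        calc U.card ≤ ((D0 ∩ U) ∪ (N0 ∩ U) ∪ (U ∩ l0.toFinset)).card := card_le_card hsub
          _ ≤ ((D0 ∩ U) ∪ (N0 ∩ U)).card + (U ∩ l0.toFinset).card := card_union_le _ _
          _ ≤ (D0 ∩ U).card + (N0 ∩ U).card + (U ∩ l0.toFinset).card := by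
              have := card_union_le (D0 ∩ U) (N0 ∩ U); omega
      -- final arithmetic
      rcases hkey1 with h1 | h1 <;> rcases hkey2 with h2 | h2
      · -- |D0∩S| < k, |D0∩U| < k : D0 too small
        omega
      · -- |D0∩S| < k, |N0∩S| < k : S mostly on the stack
        omega
      · -- |N0∩U| < k, |D0∩U| < k : U mostly on the stack
        omega
      · -- |N0∩U| < k, |N0∩S| < k : N0 too small
        omega

end Combo

section Prob

abbrev EdgeType (n : ℕ) := {e : Sym2 (Fin n) // ¬ e.IsDiag}

instance gnpMeasure.isProbabilityMeasure (n : ℕ) (p : ℝ) (hp : p ≤ 1) :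
    IsProbabilityMeasure (gnpMeasure n p hp) := by
  unfold gnpMeasure; infer_instance

lemma measurableSet_all {n : ℕ} (s : Set (EdgeType n → Bool)) : MeasurableSet s :=
  (Set.toFinite s).measurableSet

lemma gnp_cylinder (n : ℕ) (p : ℝ) (hp0 : 0 ≤ p) (hp : p ≤ 1) (E : Finset (EdgeType n)) :
    gnpMeasure n p hp {ω | ∀ e ∈ E, ω e = false} = ENNReal.ofReal (1 - p) ^ E.card := by
  have hset : {ω : EdgeType n → Bool | ∀ e ∈ E, ω e = false} =
      Set.pi Set.univ (fun e => if e ∈ E then ({false} : Set Bool) else Set.univ) := by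
    ext ω
    simp only [Set.mem_setOf_eq, Set.mem_pi, Set.mem_univ, forall_true_left]
    constructor
    · intro h e
      split_ifs with he
      · exact Set.mem_singleton_iff.mpr (h e he)
      · trivial
    · intro h e he
      have := h e
      rw [if_pos he] at this
      exact Set.mem_singleton_iff.mp this
  rw [hset]
  unfold gnpMeasure
  rw [MeasureTheory.Measure.pi_pi]
  have hfac : ∀ e : EdgeType n,
      (PMF.bernoulli (Real.toNNReal p) (Real.toNNReal_le_one.2 hp)).toMeasure
        (if e ∈ E then ({false} : Set Bool) else Set.univ) =
      if e ∈ E then ENNReal.ofReal (1 - p) else 1 := by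
    intro e
    split_ifs with he
    · rw [PMF.toMeasure_apply_singleton _ _ (measurableSet_singleton _),
        PMF.bernoulli_apply]
      simp only [Bool.cond_false]
      rw [ENNReal.coe_sub, ENNReal.coe_one, ENNReal.ofReal_sub 1 hp0, ENNReal.ofReal_one]
      rfl
    · exact measure_univ
  calc (∏ e : EdgeType n, (PMF.bernoulli (Real.toNNReal p)
          (Real.toNNReal_le_one.2 hp)).toMeasure
          (if e ∈ E then ({false} : Set Bool) else Set.univ))
      = ∏ e : EdgeType n, (if e ∈ E then ENNReal.ofReal (1 - p) else 1) := by
        exact Finset.prod_congr rfl (fun e _ => hfac e)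
    _ = ∏ e ∈ univ.filter (· ∈ E), ENNReal.ofReal (1 - p) := (Finset.prod_filter _ _).symm
    _ = ENNReal.ofReal (1 - p) ^ E.card := by
        rw [Finset.prod_const]
        congr 1
        rw [Finset.filter_mem_eq_inter, Finset.univ_inter]

/-- The edges between `A` and `B`. -/
def edgesBetween {n : ℕ} (A B : Finset (Fin n)) : Finset (EdgeType n) :=
  univ.filter (fun e => ∃ a ∈ A, ∃ b ∈ B, e.1 = s(a, b))

lemma card_edgesBetween {n k : ℕ} {A B : Finset (Fin n)} (hAB : Disjoint A B)
    (hA : A.card = k) (hB : B.card = k) : k * k ≤ (edgesBetween A B).card := by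
  rcases Nat.eq_zero_or_pos k with rfl | hk
  · simp
  · obtain ⟨a0, ha0⟩ := Finset.card_pos.mp (hA ▸ hk)
    obtain ⟨b0, hb0⟩ := Finset.card_pos.mp (hB ▸ hk)
    have hne : (a0 : Fin n) ≠ b0 := fun h => (Finset.disjoint_left.mp hAB ha0) (h ▸ hb0)
    have hinh : Nonempty (EdgeType n) :=
      ⟨⟨s(a0, b0), by simp [Sym2.mk_isDiag_iff, hne]⟩⟩
    classical
    set f : Fin n × Fin n → EdgeType n := fun ab =>
      if h : ab.1 ≠ ab.2 then ⟨s(ab.1, ab.2), by simp [Sym2.mk_isDiag_iff, h]⟩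
      else Classical.arbitrary _ with hf
    have hmaps : ∀ ab ∈ A ×ˢ B, f ab ∈ edgesBetween A B := by
      rintro ⟨a, b⟩ hab
      rw [Finset.mem_product] at hab
      have hne' : a ≠ b := fun h => (Finset.disjoint_left.mp hAB hab.1) (h ▸ hab.2)
      rw [hf]
      simp only [hne', dif_pos, ne_eq, not_false_iff]
      rw [edgesBetween, Finset.mem_filter]
      exact ⟨Finset.mem_univ _, a, hab.1, b, hab.2, rfl⟩
    have hinj : Set.InjOn f (A ×ˢ B : Finset (Fin n × Fin n)) := by
      rintro ⟨a, b⟩ hab ⟨a', b'⟩ hab' heq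
      simp only [Finset.coe_product, Set.mem_prod, Finset.mem_coe] at hab hab'
      have hne1 : a ≠ b := fun h => (Finset.disjoint_left.mp hAB hab.1) (h ▸ hab.2)
      have hne2 : a' ≠ b' := fun h => (Finset.disjoint_left.mp hAB hab'.1) (h ▸ hab'.2)
      rw [hf] at heq
      simp only [hne1, hne2, dif_pos, ne_eq, not_false_iff] at heq
      have h2 : s(a, b) = s(a', b') := congrArg Subtype.val heq
      rw [Sym2.eq_iff] at h2
      rcases h2 with ⟨rfl, rfl⟩ | ⟨rfl, rfl⟩
      · rfl
      · exact absurd hab.1 (fun h => (Finset.disjoint_left.mp hAB h) hab'.2)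
    calc k * k = (A ×ˢ B).card := by rw [Finset.card_product, hA, hB]
      _ ≤ (edgesBetween A B).card := Finset.card_le_card_of_injOn f hmaps hinj

/-- Union bound: probability that the expansion property fails. -/
lemma gnp_expansion_bound (n k : ℕ) (p : ℝ) (hp0 : 0 ≤ p) (hp : p ≤ 1) :
    gnpMeasure n p hp {ω | ¬ ∀ A B : Finset (Fin n), Disjoint A B → k ≤ A.card →
        k ≤ B.card → ∃ a ∈ A, ∃ b ∈ B, (graphOfIndicator n ω).Adj a b}
      ≤ (2 ^ n * 2 ^ n : ℝ≥0∞) * ENNReal.ofReal (1 - p) ^ (k * k) := by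
  classical
  set P : Finset (Finset (Fin n) × Finset (Fin n)) :=
    ((univ.powersetCard k) ×ˢ (univ.powersetCard k)).filter
      (fun AB => Disjoint AB.1 AB.2) with hP
  have hsub : {ω : EdgeType n → Bool | ¬ ∀ A B : Finset (Fin n), Disjoint A B →
      k ≤ A.card → k ≤ B.card → ∃ a ∈ A, ∃ b ∈ B, (graphOfIndicator n ω).Adj a b}
      ⊆ ⋃ AB ∈ P, {ω | ∀ e ∈ edgesBetween AB.1 AB.2, ω e = false} := by
    intro ω hω
    simp only [Set.mem_setOf_eq] at hω
    push_neg at hω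
    obtain ⟨A, B, hAB, hkA, hkB, hno⟩ := hω
    obtain ⟨A', hA'sub, hA'⟩ := Finset.exists_subset_card_eq hkA
    obtain ⟨B', hB'sub, hB'⟩ := Finset.exists_subset_card_eq hkB
    have hmem : (A', B') ∈ P := by
      rw [hP, Finset.mem_filter, Finset.mem_product]
      exact ⟨⟨Finset.mem_powersetCard.mpr ⟨Finset.subset_univ _, hA'⟩,
        Finset.mem_powersetCard.mpr ⟨Finset.subset_univ _, hB'⟩⟩,
        hAB.mono hA'sub hB'sub⟩
    refine Set.mem_biUnion hmem ?_
    intro e he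
    rw [edgesBetween, Finset.mem_filter] at he
    obtain ⟨-, a, ha, b, hb, hab⟩ := he
    have hnd : ¬ (s(a, b) : Sym2 (Fin n)).IsDiag := hab ▸ e.2
    have hne : a ≠ b := by rwa [Sym2.mk_isDiag_iff] at hnd
    have hnoadj := hno a (hA'sub ha) b (hB'sub hb)
    rw [graphOfIndicator] at hnoadj
    simp only [not_exists] at hnoadj
    have h1 := hnoadj hne
    have he' : e = ⟨s(a, b), by simp [Sym2.mk_isDiag_iff, hne]⟩ := Subtype.ext hab
    rw [he']
    exact Bool.not_eq_true _ ▸ h1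
  calc gnpMeasure n p hp {ω | ¬ ∀ A B : Finset (Fin n), Disjoint A B → k ≤ A.card →
        k ≤ B.card → ∃ a ∈ A, ∃ b ∈ B, (graphOfIndicator n ω).Adj a b}
      ≤ gnpMeasure n p hp (⋃ AB ∈ P, {ω | ∀ e ∈ edgesBetween AB.1 AB.2, ω e = false}) :=
        measure_mono hsub
    _ ≤ ∑ AB ∈ P, gnpMeasure n p hp {ω | ∀ e ∈ edgesBetween AB.1 AB.2, ω e = false} :=
        measure_biUnion_finset_le P _
    _ ≤ ∑ _AB ∈ P, ENNReal.ofReal (1 - p) ^ (k * k) := by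
        refine Finset.sum_le_sum ?_
        intro AB hAB
        rw [hP, Finset.mem_filter, Finset.mem_product] at hAB
        obtain ⟨⟨h1, h2⟩, h3⟩ := hAB
        rw [gnp_cylinder n p hp0 hp]
        refine pow_le_pow_right_of_le_one' (ENNReal.ofReal_le_one.mpr (by linarith)) ?_
        exact card_edgesBetween h3 (Finset.mem_powersetCard.mp h1).2
          (Finset.mem_powersetCard.mp h2).2
    _ = P.card * ENNReal.ofReal (1 - p) ^ (k * k) := by
        rw [Finset.sum_const, nsmul_eq_mul]
    _ ≤ (2 ^ n * 2 ^ n : ℝ≥0∞) * ENNReal.ofReal (1 - p) ^ (k * k) := by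
        refine mul_le_mul_left ?_ _
        have hcard : P.card ≤ 2 ^ n * 2 ^ n := by
          calc P.card ≤ ((univ.powersetCard k (α := Fin n)) ×ˢ (univ.powersetCard k)).card :=
              Finset.card_filter_le _ _
            _ = (univ.powersetCard k (α := Fin n)).card * (univ.powersetCard k (α := Fin n)).card :=
              Finset.card_product _ _
            _ ≤ 2 ^ n * 2 ^ n := by
              have h4 : (univ.powersetCard k (α := Fin n)).card ≤ 2 ^ n := by
                calc (univ.powersetCard k (α := Fin n)).card
                    ≤ (univ.powerset (α := Fin n)).card := Finset.card_le_card
                      (fun s hs => Finset.mem_powerset.mpr (Finset.mem_powersetCard.mp hs).1)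
                  _ = 2 ^ n := by rw [Finset.card_powerset, Finset.card_univ, Fintype.card_fin]
              exact Nat.mul_le_mul h4 h4
        calc (P.card : ℝ≥0∞) ≤ ((2 ^ n * 2 ^ n : ℕ) : ℝ≥0∞) := Nat.cast_le.mpr hcard
          _ = (2 ^ n * 2 ^ n : ℝ≥0∞) := by push_cast; ring

end Prob

theorem path_ramsey_random_one_half (p : ℕ → ℝ) (hp : ∀ n, 0 < p n ∧ p n < 1)
    (hnp : Tendsto (fun n : ℕ => (n : ℝ) * p n) atTop atTop)
    (α : ℝ) (hα : 0 < α) :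
    Tendsto
      (fun n : ℕ =>
        gnpMeasure n (p n) (hp n).2.le
          {ω | ∀ c : Sym2 (Fin n) → Bool,
            ∃ (u v : Fin n) (w : (graphOfIndicator n ω).Walk u v) (b : Bool),
              w.IsPath ∧ (∀ e ∈ w.edges, c e = b) ∧
                (1 / 2 - α) * (n : ℝ) ≤ (w.length : ℝ)})
      atTop (nhds 1) := by
  classical
  set α' : ℝ := min α (1/4) with hα'def
  have hα'pos : 0 < α' := lt_min hα (by norm_num)
  have hα'le : α' ≤ α := min_le_left _ _
  have hα'lt : α' ≤ 1/4 := min_le_right _ _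
  set K : ℕ → ℕ := fun n => ⌈α' * n / 8⌉₊ with hKdef
  set L : ℕ → ℕ := fun n => ⌈(1/2 - α') * n⌉₊ with hLdef
  set Good : ∀ n : ℕ, Set (EdgeType n → Bool) := fun n =>
    {ω | ∀ c : Sym2 (Fin n) → Bool,
      ∃ (u v : Fin n) (w : (graphOfIndicator n ω).Walk u v) (b : Bool),
        w.IsPath ∧ (∀ e ∈ w.edges, c e = b) ∧
          (1 / 2 - α) * (n : ℝ) ≤ (w.length : ℝ)} with hGood
  set Exp : ∀ n : ℕ, Set (EdgeType n → Bool) := fun n =>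
    {ω | ∀ A B : Finset (Fin n), Disjoint A B → K n ≤ A.card →
      K n ≤ B.card → ∃ a ∈ A, ∃ b ∈ B, (graphOfIndicator n ω).Adj a b} with hExp
  -- event inclusion
  have hincl : ∀ n : ℕ, 2 * L n + 4 * K n + 1 ≤ n → Exp n ⊆ Good n := by
    intro n hsize ω hω
    intro c
    obtain ⟨u, v, w, b, hpath, hcol, hlen⟩ :=
      mono_path_of_expander (graphOfIndicator n ω) c hω hsize
    refine ⟨u, v, w, b, hpath, hcol, ?_⟩
    have hn0 : (0 : ℝ) ≤ (n : ℝ) := Nat.cast_nonneg n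
    calc (1 / 2 - α) * (n : ℝ) ≤ (1 / 2 - α') * (n : ℝ) := by nlinarith
      _ ≤ (L n : ℝ) := Nat.le_ceil _
      _ ≤ (w.length : ℝ) := Nat.cast_le.mpr hlen
  -- eventual size condition
  have hev1 : ∀ᶠ n : ℕ in atTop, 2 * L n + 4 * K n + 1 ≤ n := by
    have htend : Tendsto (fun n : ℕ => (3 / 2) * α' * (n : ℝ)) atTop atTop := by
      apply Tendsto.const_mul_atTop (by positivity)
      exact tendsto_natCast_atTop_atTop
    filter_upwards [htend.eventually_ge_atTop 7] with n hn7
    have hn0 : (0 : ℝ) ≤ (n : ℝ) := Nat.cast_nonneg n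
    have hLb : (L n : ℝ) < (1/2 - α') * n + 1 :=
      Nat.ceil_lt_add_one (by nlinarith)
    have hKb : (K n : ℝ) < α' * n / 8 + 1 :=
      Nat.ceil_lt_add_one (by positivity)
    have : (2 * L n + 4 * K n + 1 : ℝ) ≤ (n : ℝ) := by push_cast; nlinarith
    exact_mod_cast this
  -- eventual probability bound
  have hev2 : ∀ᶠ n : ℕ in atTop,
      (2:ℝ) ^ n * 2 ^ n * (1 - p n) ^ (K n * K n) ≤ Real.exp (-(n : ℝ)) := by
    filter_upwards [hnp.eventually_ge_atTop (192 / α' ^ 2), eventually_ge_atTop 1]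
      with n hn192 hn1
    have hp0 : 0 < p n := (hp n).1
    have hp1 : p n < 1 := (hp n).2
    have hn0 : (0 : ℝ) ≤ (n : ℝ) := Nat.cast_nonneg n
    have hKlow : α' * n / 8 ≤ (K n : ℝ) := Nat.le_ceil _
    have hKnn : (0:ℝ) ≤ α' * n / 8 := by positivity
    -- p * K^2 ≥ 3n
    have hKK : ((K n * K n : ℕ) : ℝ) = (K n : ℝ) * (K n : ℝ) := by push_cast; ring
    have hpk : 3 * (n : ℝ) ≤ p n * ((K n : ℝ) * (K n : ℝ)) := by
      have h1 : (α' * n / 8) * (α' * n / 8) ≤ (K n : ℝ) * (K n : ℝ) :=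
        mul_le_mul hKlow hKlow hKnn (le_trans hKnn hKlow)
      have h2 : p n * ((α' * n / 8) * (α' * n / 8)) ≤ p n * ((K n : ℝ) * (K n : ℝ)) :=
        mul_le_mul_of_nonneg_left h1 hp0.le
      have h3 : p n * ((α' * n / 8) * (α' * n / 8)) = (α' ^ 2 / 64) * ((n : ℝ) * p n) * n := by
        ring
    -- from n * p n ≥ 192 / α'^2 :
      have h4 : (192 / α' ^ 2) * (α' ^ 2 / 64) ≤ ((n:ℝ) * p n) * (α' ^ 2 / 64) := by
        apply mul_le_mul_of_nonneg_right hn192 (by positivity)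
      have h5 : (192 / α' ^ 2) * (α' ^ 2 / 64) = 3 := by field_simp; ring
      nlinarith
    -- assemble
    have hexp2 : (2:ℝ) ^ n ≤ Real.exp (n : ℝ) := by
      calc (2:ℝ) ^ n ≤ Real.exp 1 ^ n := by
            apply pow_le_pow_left₀ (by norm_num)
            have := Real.add_one_le_exp (1:ℝ); linarith
        _ = Real.exp ((n : ℝ)) := by
            rw [← Real.exp_nat_mul]; ring_nf
    have hbase : (1 - p n) ≤ Real.exp (-(p n)) := by
      have := Real.add_one_le_exp (-(p n)); linarith
    have hpow : (1 - p n) ^ (K n * K n) ≤ Real.exp (-(p n * ((K n : ℝ) * (K n : ℝ)))) := by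
      calc (1 - p n) ^ (K n * K n) ≤ Real.exp (-(p n)) ^ (K n * K n) :=
            pow_le_pow_left₀ (by linarith) hbase _
        _ = Real.exp (((K n * K n : ℕ) : ℝ) * (-(p n))) := by rw [← Real.exp_nat_mul]
        _ = Real.exp (-(p n * ((K n : ℝ) * (K n : ℝ)))) := by rw [hKK]; ring_nf
    calc (2:ℝ) ^ n * 2 ^ n * (1 - p n) ^ (K n * K n)
        ≤ Real.exp (n : ℝ) * Real.exp (n : ℝ) *
            Real.exp (-(p n * ((K n : ℝ) * (K n : ℝ)))) := by
          apply mul_le_mul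
          · exact mul_le_mul hexp2 hexp2 (by positivity) (Real.exp_pos _).le
          · exact hpow
          · exact pow_nonneg (by linarith) _
          · positivity
      _ = Real.exp ((n : ℝ) + (n : ℝ) + -(p n * ((K n : ℝ) * (K n : ℝ)))) := by
          rw [← Real.exp_add, ← Real.exp_add]
      _ ≤ Real.exp (-(n : ℝ)) := by
          apply Real.exp_le_exp.mpr; linarith
  -- measure-theoretic eventual bound
  have hev3 : ∀ᶠ n : ℕ in atTop,
      1 - ENNReal.ofReal (Real.exp (-(n : ℝ))) ≤
        gnpMeasure n (p n) (hp n).2.le (Good n) := by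
    filter_upwards [hev1, hev2] with n hsize hreal
    have hμExpC : gnpMeasure n (p n) (hp n).2.le ((Exp n)ᶜ) ≤
        ENNReal.ofReal (Real.exp (-(n : ℝ))) := by
      have hcompl : (Exp n)ᶜ = {ω : EdgeType n → Bool |
          ¬ ∀ A B : Finset (Fin n), Disjoint A B → K n ≤ A.card →
            K n ≤ B.card → ∃ a ∈ A, ∃ b ∈ B, (graphOfIndicator n ω).Adj a b} := by
        rw [hExp]; rfl
      rw [hcompl]
      refine le_trans (gnp_expansion_bound n (K n) (p n) (hp n).1.le (hp n).2.le) ?_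
      have h2 : (2 : ℝ≥0∞) ^ n = ENNReal.ofReal ((2:ℝ) ^ n) := by
        rw [ENNReal.ofReal_pow (by norm_num)]
        norm_num
      have h3 : ENNReal.ofReal (1 - p n) ^ (K n * K n) =
          ENNReal.ofReal ((1 - p n) ^ (K n * K n)) :=
        (ENNReal.ofReal_pow (by linarith [(hp n).2]) _).symm
      rw [h2, h3, ← ENNReal.ofReal_mul (by positivity), ← ENNReal.ofReal_mul (by positivity)]
      exact ENNReal.ofReal_le_ofReal hreal
    have hExpGood : gnpMeasure n (p n) (hp n).2.le (Exp n) ≤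
        gnpMeasure n (p n) (hp n).2.le (Good n) := measure_mono (hincl n hsize)
    have hsum : gnpMeasure n (p n) (hp n).2.le (Exp n) +
        gnpMeasure n (p n) (hp n).2.le ((Exp n)ᶜ) = 1 := by
      rw [measure_add_measure_compl (measurableSet_all _)]
      exact measure_univ
    have h1 : 1 - gnpMeasure n (p n) (hp n).2.le ((Exp n)ᶜ) ≤
        gnpMeasure n (p n) (hp n).2.le (Exp n) :=
      tsub_le_iff_right.mpr (le_of_eq hsum.symm)
    calc 1 - ENNReal.ofReal (Real.exp (-(n : ℝ)))
        ≤ 1 - gnpMeasure n (p n) (hp n).2.le ((Exp n)ᶜ) := tsub_le_tsub_left hμExpC 1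
      _ ≤ gnpMeasure n (p n) (hp n).2.le (Exp n) := h1
      _ ≤ gnpMeasure n (p n) (hp n).2.le (Good n) := hExpGood
  -- squeeze
  have hupper : ∀ᶠ n : ℕ in atTop,
      gnpMeasure n (p n) (hp n).2.le (Good n) ≤ 1 :=
    Eventually.of_forall (fun n => prob_le_one)
  have h0 : Tendsto (fun n : ℕ => ENNReal.ofReal (Real.exp (-(n : ℝ)))) atTop (nhds 0) := by
    have hr : Tendsto (fun n : ℕ => Real.exp (-(n : ℝ))) atTop (nhds 0) :=
      Real.tendsto_exp_atBot.comp (tendsto_neg_atTop_atBot.comp tendsto_natCast_atTop_atTop)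
    have := (ENNReal.continuous_ofReal.tendsto 0).comp hr
    simpa [Function.comp_def] using this
  have hlow : Tendsto (fun n : ℕ => 1 - ENNReal.ofReal (Real.exp (-(n : ℝ)))) atTop
      (nhds 1) := by
    have := ENNReal.Tendsto.sub (tendsto_const_nhds : Tendsto _ _ (nhds (1:ℝ≥0∞))) h0
      (Or.inl ENNReal.one_ne_top)
    simpa using this
  exact tendsto_of_tendsto_of_tendsto_of_le_of_le' hlow tendsto_const_nhds hev3 hupper
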